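/- Let (p*, b*) be optimal for the price-taker storage LP with multiplier θ for the balance constraint satisfying the KKT conditions. If interval u is a discharge-withholding interval (0 < p*_u < P̄) and interval x discharges at capacity (p*_x = P̄), then λ_x ≥ λ_u. If additionally interval v is a charge-withholding interval (0 < b*_v < P̄), then λ_x ≥ λ_v/η². -/

import Mathlib

/-- KKT conditions for the price-taker storage LP: stationarity, primal box
feasibility, dual feasibility, and complementary slackness. -/
def StorageKKT (T : ℕ) (η Pm : ℝ) (lam p b : Fin T → ℝ) (θ : ℝ)
    (δm δp βm βp : Fin T → ℝ) : Prop :=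
  (∀ t, lam t + θ / η + δm t - δp t = 0) ∧
  (∀ t, -lam t - θ * η + βm t - βp t = 0) ∧
  (∑ t, (p t / η - b t * η)) = 0 ∧
  (∀ t, 0 ≤ p t ∧ p t ≤ Pm) ∧ (∀ t, 0 ≤ b t ∧ b t ≤ Pm) ∧
  (∀ t, 0 ≤ δm t ∧ 0 ≤ δp t ∧ 0 ≤ βm t ∧ 0 ≤ βp t) ∧
  (∀ t, δm t * p t = 0 ∧ δp t * (p t - Pm) = 0) ∧
  (∀ t, βm t * b t = 0 ∧ βp t * (b t - Pm) = 0)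

/-- Proposition 5, part 1: at a KKT point, a discharge-at-capacity
interval `x` has price at least that of any discharge-withholding interval `u`,
and at least `λ v / η²` for any charge-withholding interval `v`. -/
theorem taker_price_decision_discharge_capacity
    (T : ℕ) (η Pm : ℝ) (lam p b : Fin T → ℝ) (θ : ℝ)
    (δm δp βm βp : Fin T → ℝ)
    (hη : 0 < η) (hη1 : η < 1) (hPm : 0 < Pm) (hlam : ∀ t, 0 ≤ lam t)
    (hkkt : StorageKKT T η Pm lam p b θ δm δp βm βp)
    (u x : Fin T) (hu : 0 < p u ∧ p u < Pm) (hx : p x = Pm) :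
    lam x ≥ lam u ∧
      (∀ v : Fin T, 0 < b v ∧ b v < Pm → lam x ≥ lam v / η ^ 2) := by
  obtain ⟨hstat1, hstat2, -, -, -, hdual, hcsP, hcsB⟩ := hkkt
  have hηne : η ≠ 0 := ne_of_gt hη
  -- at u: δm u = 0 and δp u = 0
  have hδmu : δm u = 0 := by
    have := (hcsP u).1
    rcases mul_eq_zero.mp this with h | h
    · exact h
    · exact absurd h (ne_of_gt hu.1)
  have hδpu : δp u = 0 := by
    have := (hcsP u).2
    rcases mul_eq_zero.mp this with h | h
    · exact h
    · exact absurd h (sub_ne_zero.mpr (ne_of_lt hu.2))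
  have hlamu : lam u = -(θ / η) := by
    have := hstat1 u; rw [hδmu, hδpu] at this; linarith
  -- at x: δm x = 0, δp x ≥ 0
  have hδmx : δm x = 0 := by
    have := (hcsP x).1
    rcases mul_eq_zero.mp this with h | h
    · exact h
    · rw [hx] at h; exact absurd h (ne_of_gt hPm)
  have hlamx : lam x ≥ -(θ / η) := by
    have h1 := hstat1 x
    have h2 := (hdual x).2.1
    rw [hδmx] at h1; linarith
  refine ⟨by linarith, fun v hv => ?_⟩
  have hβmv : βm v = 0 := by
    have := (hcsB v).1
    rcases mul_eq_zero.mp this with h | h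
    · exact h
    · exact absurd h (ne_of_gt hv.1)
  have hβpv : βp v = 0 := by
    have := (hcsB v).2
    rcases mul_eq_zero.mp this with h | h
    · exact h
    · exact absurd h (sub_ne_zero.mpr (ne_of_lt hv.2))
  have hlamv : lam v = -(θ * η) := by
    have := hstat2 v; rw [hβmv, hβpv] at this; linarith
  have : lam v / η ^ 2 = -(θ / η) := by
    rw [hlamv]; field_simp
  linarith
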